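/- arXiv:2603.05382 — 2 statements merged into one kernel-verified Lean document; each statement's English description precedes it below -/
import Mathlib

section
/- Let μ be a locally finite Borel measure on ℝⁿ, let E ⊆ ℝⁿ be open and bounded with finite (classical) perimeter, and suppose for each x ∈ E there exists r_x > 0 with ℒ(B_{r_x}(x) ∩ E) = ½ℒ(B_{r_x}(x)). Assume the relative isoperimetric inequality min{ℒ(B_r(x)∩E), ℒ(B_r(x)∩E^c)}^{(n−1)/n} ≤ C₁ |D1_E|(B_r(x)) for all balls. Then μ(E) ≤ C ∫_{ℝⁿ} M₁μ d|D1_E|, where |D1_E| is the total variation (perimeter) measure of E and M₁μ(x) = sup_{r>0} r μ(B_r(x))/ℒ(B_r(x)). -/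
open MeasureTheory
open scoped ENNReal

/-- The fractional maximal function `M_α μ(x) = sup_{r>0} r^α μ(B_r(x))/|B_r(x)|`. -/
noncomputable def fracMax (n : ℕ) (α : ℝ) (μ : Measure (EuclideanSpace ℝ (Fin n)))
    (x : EuclideanSpace ℝ (Fin n)) : ℝ≥0∞ :=
  ⨆ (r : ℝ) (_ : 0 < r),
    ENNReal.ofReal (r ^ α) * μ (Metric.ball x r) / volume (Metric.ball x r)

/-- Key covering estimate in the Meyers–Ziemer theorem: if `E` is open and bounded,
`P` is its perimeter measure `|D1_E|` (assumed to satisfy the relative isoperimetric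
inequality), and every `x ∈ E` admits a ball where `E` has density `1/2`, then
`μ(E) ≤ C ∫ M₁μ dP`. -/
theorem measure_le_perimeter_integral (n : ℕ) (C₁ : ℝ≥0∞) (hC₁ : C₁ ≠ ⊤) :
    ∃ C : ℝ≥0∞, C ≠ ⊤ ∧
      ∀ (μ : Measure (EuclideanSpace ℝ (Fin n))) [IsLocallyFiniteMeasure μ]
        (E : Set (EuclideanSpace ℝ (Fin n))), IsOpen E → Bornology.IsBounded E →
        ∀ (P : Measure (EuclideanSpace ℝ (Fin n))) [IsFiniteMeasure P],
        (∀ x ∈ E, ∃ r : ℝ, 0 < r ∧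
            volume (Metric.ball x r ∩ E) = volume (Metric.ball x r) / 2) →
        (∀ (x : EuclideanSpace ℝ (Fin n)) (r : ℝ), 0 < r →
            (min (volume (Metric.ball x r ∩ E)) (volume (Metric.ball x r ∩ Eᶜ)))
                ^ (((n : ℝ) - 1) / n)
              ≤ C₁ * P (Metric.ball x r)) →
        μ E ≤ C * ∫⁻ x, fracMax n 1 μ x ∂P := by
  classical
  set X := EuclideanSpace ℝ (Fin n) with hX
  set ω : ℝ≥0∞ := volume (Metric.ball (0 : X) 1) with hωdef
  have hω0 : ω ≠ 0 := (Metric.measure_ball_pos volume _ one_pos).ne'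
  have hωt : ω ≠ ⊤ := measure_ball_lt_top.ne
  set β : ℝ := ((n : ℝ) - 1) / n with hβdef
  have hβ0 : 0 ≤ β := by
    rcases Nat.eq_zero_or_pos n with h | h
    · simp [hβdef, h]
    · have : (1 : ℝ) ≤ n := by exact_mod_cast h
      exact div_nonneg (by linarith) (Nat.cast_nonneg n)
  have hω20 : ω / 2 ≠ 0 := by
    rw [div_eq_mul_inv]
    exact mul_ne_zero hω0 (ENNReal.inv_ne_zero.mpr (by norm_num))
  have hω2t : ω / 2 ≠ ⊤ := (ENNReal.div_lt_top hωt (by norm_num)).ne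
  set c0 : ℝ≥0∞ := (ω / 2) ^ β with hc0def
  have hc00 : c0 ≠ 0 := (ENNReal.rpow_pos (pos_iff_ne_zero.mpr hω20) hω2t).ne'
  have hc0t : c0 ≠ ⊤ := ENNReal.rpow_ne_top_of_nonneg hβ0 hω2t
  set K : ℝ≥0∞ := ENNReal.ofReal ((6 : ℝ) ^ (n - 1)) * ω * C₁ / c0 with hKdef
  have hKt : K ≠ ⊤ := by
    rw [hKdef, div_eq_mul_inv]
    exact ENNReal.mul_ne_top
      (ENNReal.mul_ne_top (ENNReal.mul_ne_top ENNReal.ofReal_ne_top hωt) hC₁)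
      (ENNReal.inv_ne_top.mpr hc00)
  refine ⟨K, hKt, ?_⟩
  intro μ _ E hEo hEb P _ hdens hiso
  rcases Set.eq_empty_or_nonempty E with rfl | ⟨x₀, hx₀⟩
  · simp
  rcases Nat.eq_zero_or_pos n with hn | hn
  · exfalso
    obtain ⟨s, hs, hhalf⟩ := hdens x₀ hx₀
    haveI : Subsingleton X := by
      rw [hX]; subst hn; infer_instance
    have hEq : Metric.ball x₀ s ∩ E = Metric.ball x₀ s := by
      refine Set.inter_eq_left.mpr ?_
      intro z _
      have : z = x₀ := Subsingleton.elim _ _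
      rw [this]; exact hx₀
    rw [hEq] at hhalf
    exact (ENNReal.half_lt_self (Metric.measure_ball_pos volume x₀ hs).ne'
      measure_ball_lt_top.ne).ne' hhalf
  -- now 0 < n
  have hvol : ∀ (x : X) {s : ℝ}, 0 < s →
      volume (Metric.ball x s) = ENNReal.ofReal (s ^ n) * ω := by
    intro x s hs
    rw [Measure.addHaar_ball_of_pos volume x hs, finrank_euclideanSpace_fin]
  choose! r hrpos hrhalf using hdens
  have hEvt : volume E ≠ ⊤ := hEb.measure_lt_top.ne
  set R : ℝ := max 1 ((2 * volume E / ω).toReal) with hRdef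
  have hrR : ∀ x ∈ E, r x ≤ R := by
    intro x hx
    have h1 : volume (Metric.ball x (r x)) ≤ 2 * volume E := by
      have hsub : volume (Metric.ball x (r x)) / 2 ≤ volume E := by
        rw [← hrhalf x hx]
        exact measure_mono Set.inter_subset_right
      calc volume (Metric.ball x (r x))
          = volume (Metric.ball x (r x)) / 2 * 2 :=
            (ENNReal.div_mul_cancel (by norm_num) (by norm_num)).symm
        _ ≤ volume E * 2 := mul_le_mul_left hsub 2
        _ = 2 * volume E := mul_comm _ _
    rw [hvol x (hrpos x hx)] at h1
    have h2 : ENNReal.ofReal ((r x) ^ n) ≤ 2 * volume E / ω :=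
      (ENNReal.le_div_iff_mul_le (Or.inl hω0) (Or.inl hωt)).mpr h1
    have h3 : (r x) ^ n ≤ (2 * volume E / ω).toReal := by
      refine (ENNReal.ofReal_le_iff_le_toReal ?_).mp h2
      exact (ENNReal.div_lt_top (ENNReal.mul_ne_top (by norm_num) hEvt) hω0).ne
    rcases le_or_gt (r x) 1 with h | h
    · exact h.trans (le_max_left _ _)
    · have : r x ≤ (r x) ^ n := le_self_pow₀ h.le hn.ne'
      exact (this.trans h3).trans (le_max_right _ _)
  obtain ⟨u, huE, hdisj, hcov⟩ :=
    Vitali.exists_disjoint_subfamily_covering_enlargement_closedBall E (fun a => a) r R hrR 4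
      (by norm_num)
  -- key isoperimetric consequence
  have key1 : ∀ b ∈ u, ENNReal.ofReal ((r b) ^ (n - 1)) * c0 ≤ C₁ * P (Metric.ball b (r b)) := by
    intro b hb
    have hbE := huE hb
    have hs := hrpos b hbE
    set s := r b with hsdef
    have hV := hvol b hs
    have hVt : volume (Metric.ball b s) ≠ ⊤ := measure_ball_lt_top.ne
    have hhalfC : volume (Metric.ball b s ∩ Eᶜ) = volume (Metric.ball b s) / 2 := by
      have hsplit := measure_inter_add_diff (μ := volume) (Metric.ball b s) hEo.measurableSet
      rw [hrhalf b hbE, Set.diff_eq] at hsplit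
      have h2 : volume (Metric.ball b s) / 2 + volume (Metric.ball b s ∩ Eᶜ)
          = volume (Metric.ball b s) / 2 + volume (Metric.ball b s) / 2 := by
        rw [hsplit, ENNReal.add_halves]
      exact (ENNReal.add_right_inj (by
        exact (ENNReal.div_lt_top hVt (by norm_num)).ne)).mp h2
    have hmin := hiso b s hs
    rw [hrhalf b hbE, hhalfC, min_self] at hmin
    -- compute (V/2)^β
    have hpow : (volume (Metric.ball b s) / 2) ^ β = ENNReal.ofReal (s ^ (n - 1)) * c0 := by
      rw [hV, mul_div_assoc, ENNReal.mul_rpow_of_nonneg _ _ hβ0,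
        ENNReal.ofReal_rpow_of_pos (pow_pos hs n)]
      congr 1
      rw [← Real.rpow_natCast s n, ← Real.rpow_mul hs.le]
      have hne : (n : ℝ) ≠ 0 := by exact_mod_cast hn.ne'
      have : (n : ℝ) * β = (n : ℝ) - 1 := by
        rw [hβdef]; field_simp
      rw [this]
      have hcast : ((n - 1 : ℕ) : ℝ) = (n : ℝ) - 1 := by
        rw [Nat.cast_sub hn]; norm_num
      rw [← hcast, Real.rpow_natCast]
    rw [hpow] at hmin
    exact hmin
  have hPpos : ∀ b ∈ u, 0 < P (Metric.ball b (r b)) := by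
    intro b hb
    by_contra h
    push_neg at h
    have h0 : P (Metric.ball b (r b)) = 0 := le_antisymm h zero_le
    have := key1 b hb
    rw [h0, mul_zero, nonpos_iff_eq_zero, mul_eq_zero] at this
    rcases this with h' | h'
    · exact absurd h' (ENNReal.ofReal_pos.mpr (pow_pos (hrpos b (huE hb)) _)).ne'
    · exact hc00 h'
  -- countability of u
  have hdisj' : Pairwise (Function.onFun Disjoint fun b : u => Metric.ball (b : X) (r b)) := by
    intro i j hij
    exact Disjoint.mono Metric.ball_subset_closedBall Metric.ball_subset_closedBall
      (hdisj i.2 j.2 (Subtype.coe_ne_coe.mpr hij))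
  have hucount : u.Countable := by
    have h := Measure.countable_meas_pos_of_disjoint_iUnion (μ := P)
      (As := fun b : u => Metric.ball (b : X) (r b)) (fun b => Metric.isOpen_ball.measurableSet)
      hdisj'
    have huniv : {i : u | 0 < P (Metric.ball (i : X) (r i))} = Set.univ :=
      Set.eq_univ_of_forall fun b => hPpos b b.2
    rw [huniv] at h
    haveI : Countable u := Set.countable_univ_iff.mp h
    exact Set.countable_coe_iff.mp this
  haveI := hucount.to_subtype
  -- covering
  have hEcov : E ⊆ ⋃ b ∈ u, Metric.closedBall b (4 * r b) := by
    intro x hx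
    obtain ⟨b, hbu, hsub⟩ := hcov x hx
    exact Set.mem_biUnion hbu (hsub (Metric.mem_closedBall_self (hrpos x hx).le))
  -- per-ball estimate
  have hball : ∀ b ∈ u, μ (Metric.closedBall b (4 * r b)) ≤
      K * ∫⁻ y in Metric.ball b (r b), fracMax n 1 μ y ∂P := by
    intro b hb
    have hbE := huE hb
    have hs := hrpos b hbE
    set s := r b with hsdef
    have h6 : (0 : ℝ) < 6 * s := by linarith
    have hA0 : ENNReal.ofReal (6 * s) ≠ 0 := (ENNReal.ofReal_pos.mpr h6).ne'
    have hAt : ENNReal.ofReal (6 * s) ≠ ⊤ := ENNReal.ofReal_ne_top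
    have key1' : ENNReal.ofReal (s ^ (n - 1)) ≤ C₁ * P (Metric.ball b s) / c0 :=
      (ENNReal.le_div_iff_mul_le (Or.inl hc00) (Or.inl hc0t)).mpr (key1 b hb)
    have hpt : ∀ y ∈ Metric.ball b s, μ (Metric.closedBall b (4 * s)) ≤
        (K * P (Metric.ball b s)) * fracMax n 1 μ y := by
      intro y hy
      have hsub : Metric.closedBall b (4 * s) ⊆ Metric.ball y (6 * s) := by
        intro z hz
        have hzb : dist z b ≤ 4 * s := Metric.mem_closedBall.mp hz
        have hby : dist y b < s := Metric.mem_ball.mp hy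
        have : dist z y ≤ dist z b + dist b y := dist_triangle _ _ _
        rw [dist_comm b y] at this
        exact Metric.mem_ball.mpr (by nlinarith [this])
      have hfrac : ENNReal.ofReal ((6 * s) ^ (1 : ℝ)) * μ (Metric.ball y (6 * s)) /
          volume (Metric.ball y (6 * s)) ≤ fracMax n 1 μ y := by
        unfold fracMax
        exact le_iSup₂_of_le (6 * s) h6 le_rfl
      rw [Real.rpow_one] at hfrac
      have hV60 : volume (Metric.ball y (6 * s)) ≠ 0 :=
        (Metric.measure_ball_pos volume y h6).ne'
      have hV6t : volume (Metric.ball y (6 * s)) ≠ ⊤ := measure_ball_lt_top.ne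
      have h1 : ENNReal.ofReal (6 * s) * μ (Metric.ball y (6 * s)) ≤
          fracMax n 1 μ y * volume (Metric.ball y (6 * s)) :=
        (ENNReal.div_le_iff hV60 hV6t).mp hfrac
      -- volume of 6s-ball
      have hV6 : volume (Metric.ball y (6 * s)) =
          ENNReal.ofReal ((6 * s) ^ (n - 1)) * ENNReal.ofReal (6 * s) * ω := by
        rw [hvol y h6, ← ENNReal.ofReal_mul (by positivity)]
        congr 2
        rw [← pow_succ, Nat.sub_add_cancel hn]
      have h2 : μ (Metric.closedBall b (4 * s)) * ENNReal.ofReal (6 * s) ≤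
          (fracMax n 1 μ y * ENNReal.ofReal ((6 * s) ^ (n - 1)) * ω) * ENNReal.ofReal (6 * s) := by
        calc μ (Metric.closedBall b (4 * s)) * ENNReal.ofReal (6 * s)
            = ENNReal.ofReal (6 * s) * μ (Metric.closedBall b (4 * s)) := mul_comm _ _
          _ ≤ ENNReal.ofReal (6 * s) * μ (Metric.ball y (6 * s)) :=
              mul_le_mul_right (measure_mono hsub) _
          _ ≤ fracMax n 1 μ y * volume (Metric.ball y (6 * s)) := h1
          _ = (fracMax n 1 μ y * ENNReal.ofReal ((6 * s) ^ (n - 1)) * ω) *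
              ENNReal.ofReal (6 * s) := by rw [hV6]; ring
      have h3 : μ (Metric.closedBall b (4 * s)) ≤
          fracMax n 1 μ y * ENNReal.ofReal ((6 * s) ^ (n - 1)) * ω :=
        (ENNReal.mul_le_mul_iff_left hA0 hAt).mp h2
      have h4 : ENNReal.ofReal ((6 * s) ^ (n - 1)) =
          ENNReal.ofReal ((6 : ℝ) ^ (n - 1)) * ENNReal.ofReal (s ^ (n - 1)) := by
        rw [mul_pow, ENNReal.ofReal_mul (by positivity)]
      calc μ (Metric.closedBall b (4 * s))
          ≤ fracMax n 1 μ y * ENNReal.ofReal ((6 * s) ^ (n - 1)) * ω := h3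
        _ = fracMax n 1 μ y * (ENNReal.ofReal ((6 : ℝ) ^ (n - 1)) *
            ENNReal.ofReal (s ^ (n - 1))) * ω := by rw [h4]
        _ ≤ fracMax n 1 μ y * (ENNReal.ofReal ((6 : ℝ) ^ (n - 1)) *
            (C₁ * P (Metric.ball b s) / c0)) * ω := by gcongr
        _ = (K * P (Metric.ball b s)) * fracMax n 1 μ y := by
            rw [hKdef]
            simp only [div_eq_mul_inv]
            ring
    have hPb0 : P (Metric.ball b s) ≠ 0 := (hPpos b hb).ne'
    have hPbt : P (Metric.ball b s) ≠ ⊤ := measure_ne_top P _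
    have hstep : μ (Metric.closedBall b (4 * s)) * P (Metric.ball b s) ≤
        (K * ∫⁻ y in Metric.ball b s, fracMax n 1 μ y ∂P) * P (Metric.ball b s) := by
      calc μ (Metric.closedBall b (4 * s)) * P (Metric.ball b s)
          = ∫⁻ _ in Metric.ball b s, μ (Metric.closedBall b (4 * s)) ∂P :=
            (setLIntegral_const _ _).symm
        _ ≤ ∫⁻ y in Metric.ball b s, (K * P (Metric.ball b s)) * fracMax n 1 μ y ∂P :=
            setLIntegral_mono' Metric.isOpen_ball.measurableSet hpt
        _ = (K * P (Metric.ball b s)) * ∫⁻ y in Metric.ball b s, fracMax n 1 μ y ∂P :=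
            lintegral_const_mul' _ _ (ENNReal.mul_ne_top hKt hPbt)
        _ = (K * ∫⁻ y in Metric.ball b s, fracMax n 1 μ y ∂P) * P (Metric.ball b s) := by
            ring
    exact (ENNReal.mul_le_mul_iff_left hPb0 hPbt).mp hstep
  -- sum of restricted measures is below P
  have hsum : (Measure.sum fun b : u => P.restrict (Metric.ball (b : X) (r b))) ≤ P := by
    refine Measure.le_iff.mpr fun t ht => ?_
    rw [Measure.sum_apply _ ht]
    have hdisj'' : Pairwise (Function.onFun Disjoint
        fun b : u => t ∩ Metric.ball (b : X) (r b)) := by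
      intro i j hij
      exact (hdisj' hij).mono Set.inter_subset_right Set.inter_subset_right
    calc ∑' b : u, P.restrict (Metric.ball (b : X) (r b)) t
        = ∑' b : u, P (t ∩ Metric.ball (b : X) (r b)) := by
          simp [Measure.restrict_apply ht]
      _ = P (⋃ b : u, t ∩ Metric.ball (b : X) (r b)) :=
          (measure_iUnion hdisj'' fun b => ht.inter Metric.isOpen_ball.measurableSet).symm
      _ ≤ P t := measure_mono (Set.iUnion_subset fun b => Set.inter_subset_left)
  calc μ E ≤ μ (⋃ b ∈ u, Metric.closedBall b (4 * r b)) := measure_mono hEcov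
    _ ≤ ∑' b : u, μ (Metric.closedBall b (4 * r b)) := measure_biUnion_le μ hucount _
    _ ≤ ∑' b : u, K * ∫⁻ y in Metric.ball (b : X) (r b), fracMax n 1 μ y ∂P :=
        ENNReal.tsum_le_tsum fun b => hball b b.2
    _ = K * ∑' b : u, ∫⁻ y in Metric.ball (b : X) (r b), fracMax n 1 μ y ∂P :=
        ENNReal.tsum_mul_left
    _ = K * ∫⁻ y, fracMax n 1 μ y
        ∂(Measure.sum fun b : u => P.restrict (Metric.ball (b : X) (r b))) := by
        rw [lintegral_sum_measure]
    _ ≤ K * ∫⁻ y, fracMax n 1 μ y ∂P :=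
        mul_le_mul_right (lintegral_mono' hsum le_rfl) K
end

section
/- Let n ≥ 1, 0 < α < n, and let μ be a Borel measure on ℝⁿ with M_α μ bounded: M_α μ(x) ≤ A for all x. Let a ∈ L^∞(ℝⁿ) be supported in a ball B = B_R(x₀) with ∫_B a dx = 0. Then the global part of the Riesz potential satisfies ∫_{(3B)^c} |I_α a(x)| dμ(x) ≤ C(n,α) ∫_B |a(y)| M_α μ(y) dy, where I_α a(x) = γ(α)^{-1} ∫ a(y) |x−y|^{α−n} dy. -/
open MeasureTheory
open scoped ENNReal

/-- The normalization constant `γ(α) = 2^α π^{n/2} Γ(α/2) / Γ((n-α)/2)` of the Riesz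
potential. -/
noncomputable def rieszGamma (n : ℕ) (α : ℝ) : ℝ :=
  2 ^ α * Real.pi ^ ((n : ℝ) / 2) * Real.Gamma (α / 2) / Real.Gamma (((n : ℝ) - α) / 2)

/-- The Riesz potential `I_α a(x) = γ(α)⁻¹ ∫ a(y) |x-y|^{α-n} dy`. -/
noncomputable def rieszPot (n : ℕ) (α : ℝ) (a : EuclideanSpace ℝ (Fin n) → ℝ)
    (x : EuclideanSpace ℝ (Fin n)) : ℝ :=
  (rieszGamma n α)⁻¹ * ∫ y, a y * dist x y ^ (α - (n : ℝ))

lemma rpow_sub_rpow_abs_le {p m u v : ℝ} (hp : p < 0) (hm : 0 < m) (hu : m ≤ u) (hv : m ≤ v) :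
    |u ^ p - v ^ p| ≤ (-p) * m ^ (p - 1) * |u - v| := by
  have key : ∀ x ∈ Set.Ici m, HasDerivWithinAt (fun t : ℝ => t ^ p) (p * x ^ (p - 1))
      (Set.Ici m) x := fun x hx =>
    (Real.hasDerivAt_rpow_const (Or.inl (hm.trans_le hx).ne')).hasDerivWithinAt
  have bound : ∀ x ∈ Set.Ici m, ‖p * x ^ (p - 1)‖ ≤ (-p) * m ^ (p - 1) := by
    intro x hx
    rw [norm_mul, Real.norm_eq_abs, Real.norm_eq_abs, abs_of_neg hp,
      abs_of_pos (Real.rpow_pos_of_pos (hm.trans_le hx) _)]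
    exact mul_le_mul_of_nonneg_left
      (Real.rpow_le_rpow_of_nonpos hm hx (by linarith)) (by linarith)
  have := (convex_Ici m).norm_image_sub_le_of_norm_hasDerivWithin_le key bound hv hu
  simpa [Real.norm_eq_abs] using this

lemma integrable_of_support_ball {n : ℕ} {x₀ : EuclideanSpace ℝ (Fin n)} {R M : ℝ}
    {f : EuclideanSpace ℝ (Fin n) → ℝ} (hf : Measurable f)
    (h0 : ∀ x ∉ Metric.ball x₀ R, f x = 0) (hM : ∀ x, |f x| ≤ M) : Integrable f := by
  rw [← Set.indicator_eq_self.2 (Function.support_subset_iff'.2 h0),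
    integrable_indicator_iff measurableSet_ball]
  exact Measure.integrableOn_of_bounded measure_ball_lt_top.ne hf.aestronglyMeasurable
    (ae_of_all _ fun x => by rw [Real.norm_eq_abs]; exact hM x)

lemma rieszGamma_pos {n : ℕ} {α : ℝ} (hα : 0 < α) (hαn : α < n) : 0 < rieszGamma n α := by
  unfold rieszGamma
  apply div_pos
  · exact mul_pos (mul_pos (Real.rpow_pos_of_pos two_pos _)
      (Real.rpow_pos_of_pos Real.pi_pos _)) (Real.Gamma_pos_of_pos (by linarith))
  · exact Real.Gamma_pos_of_pos (by linarith)

lemma tail_bound {n : ℕ} {α : ℝ} (hα : 0 < α) (hαn : α < n)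
    (μ : Measure (EuclideanSpace ℝ (Fin n))) (x₀ y : EuclideanSpace ℝ (Fin n)) {R : ℝ}
    (hR : 0 < R) (hy : y ∈ Metric.ball x₀ R) :
    ENNReal.ofReal R * ∫⁻ x in (Metric.ball x₀ (3 * R))ᶜ,
        ENNReal.ofReal (dist x x₀ ^ (α - (n : ℝ) - 1)) ∂μ ≤
      (2 * ENNReal.ofReal ((3:ℝ) ^ (α - (n:ℝ) - 1) * (8:ℝ) ^ ((n:ℝ) - α)) *
        volume (Metric.ball (0 : EuclideanSpace ℝ (Fin n)) 1)) * fracMax n α μ y := by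
  have hn : 0 < n := by exact_mod_cast hα.trans hαn
  haveI : Nonempty (Fin n) := ⟨⟨0, hn⟩⟩
  set p : ℝ := α - (n : ℝ) - 1 with hpdef
  have hp : p < 0 := by
    have : (1:ℝ) ≤ n := by exact_mod_cast hn
    simp only [hpdef]; linarith
  set V := volume (Metric.ball (0 : EuclideanSpace ℝ (Fin n)) 1) with hV
  set F := fracMax n α μ y with hF
  set A : ℕ → Set (EuclideanSpace ℝ (Fin n)) :=
    fun k => Metric.ball x₀ (3 * R * 2 ^ (k + 1)) \ Metric.ball x₀ (3 * R * 2 ^ k) with hA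
  -- covering
  have hcover : (Metric.ball x₀ (3 * R))ᶜ ⊆ ⋃ k : ℕ, A k := by
    intro x hx
    have hD : 3 * R ≤ dist x x₀ := by
      simpa [Metric.mem_ball, not_lt] using hx
    have h3R : (0:ℝ) < 3 * R := by positivity
    have h1 : (1:ℝ) ≤ dist x x₀ / (3 * R) := (one_le_div h3R).2 hD
    obtain ⟨k, hk1, hk2⟩ := exists_nat_pow_near h1 one_lt_two
    have hk2' : dist x x₀ < 2 ^ (k+1) * (3 * R) := (div_lt_iff₀ h3R).1 hk2
    have hk1' : 2 ^ k * (3 * R) ≤ dist x x₀ := (le_div_iff₀ h3R).1 hk1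
    refine Set.mem_iUnion.2 ⟨k, ?_, ?_⟩
    · rw [Metric.mem_ball]; linarith
    · rw [Metric.mem_ball, not_lt]; linarith
  -- annulus bound
  have annk : ∀ k : ℕ, ∫⁻ x in A k, ENNReal.ofReal (dist x x₀ ^ p) ∂μ ≤
      ENNReal.ofReal ((3 * R * 2 ^ k) ^ p) * μ (A k) := by
    intro k
    have : ∫⁻ x in A k, ENNReal.ofReal (dist x x₀ ^ p) ∂μ ≤
        ∫⁻ _ in A k, ENNReal.ofReal ((3 * R * 2 ^ k) ^ p) ∂μ := by
      refine setLIntegral_mono measurable_const fun x hx => ?_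
      have hx' : 3 * R * 2 ^ k ≤ dist x x₀ := by
        have := hx.2
        rw [Metric.mem_ball, not_lt] at this
        exact this
      exact ENNReal.ofReal_le_ofReal
        (Real.rpow_le_rpow_of_nonpos (by positivity) hx' hp.le)
    simpa [setLIntegral_const] using this
  -- annulus measure bound
  have hmuA : ∀ k : ℕ, μ (A k) ≤ μ (Metric.ball y (8 * R * 2 ^ k)) := by
    intro k
    refine measure_mono fun z hz => ?_
    have hz1 : dist z x₀ < 3 * R * 2 ^ (k + 1) := hz.1
    have hyx : dist x₀ y < R := by rw [dist_comm]; exact hy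
    have h2k : (1:ℝ) ≤ 2 ^ k := one_le_pow₀ one_le_two
    have : dist z y ≤ dist z x₀ + dist x₀ y := dist_triangle _ _ _
    rw [Metric.mem_ball]
    have : 3 * R * 2 ^ (k+1) = 6 * R * 2 ^ k := by ring
    nlinarith [dist_triangle z x₀ y, pow_pos (zero_lt_two (α := ℝ)) k]
  -- fracMax ball bound
  have hball : ∀ r : ℝ, 0 < r →
      μ (Metric.ball y r) ≤ F * ENNReal.ofReal (r ^ ((n:ℝ) - α)) * V := by
    intro r hr
    have hsup : ENNReal.ofReal (r ^ α) * μ (Metric.ball y r) / volume (Metric.ball y r) ≤ F :=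
      le_iSup₂ (f := fun (r : ℝ) (_ : 0 < r) =>
        ENNReal.ofReal (r ^ α) * μ (Metric.ball y r) / volume (Metric.ball y r)) r hr
    have h1 : volume (Metric.ball y r) ≠ 0 := (Metric.measure_ball_pos volume y hr).ne'
    have h2 : volume (Metric.ball y r) ≠ ⊤ := measure_ball_lt_top.ne
    have key : ENNReal.ofReal (r ^ α) * μ (Metric.ball y r) ≤
        F * volume (Metric.ball y r) := (ENNReal.div_le_iff h1 h2).1 hsup
    have hvol : volume (Metric.ball y r) = ENNReal.ofReal (r ^ (n : ℕ)) * V := by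
      rw [hV, Measure.addHaar_ball _ _ hr.le, finrank_euclideanSpace_fin]
    have hr2 : (r : ℝ) ^ (n : ℕ) = r ^ α * r ^ ((n:ℝ) - α) := by
      rw [← Real.rpow_natCast r n, ← Real.rpow_add hr]; ring_nf
    have ha0 : ENNReal.ofReal (r ^ α) ≠ 0 :=
      (ENNReal.ofReal_pos.2 (Real.rpow_pos_of_pos hr α)).ne'
    rw [← ENNReal.mul_le_mul_iff_right ha0 ENNReal.ofReal_ne_top]
    calc ENNReal.ofReal (r ^ α) * μ (Metric.ball y r)
        ≤ F * volume (Metric.ball y r) := key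
      _ = F * (ENNReal.ofReal (r ^ α * r ^ ((n:ℝ) - α)) * V) := by rw [hvol, hr2]
      _ = ENNReal.ofReal (r ^ α) *
          (F * ENNReal.ofReal (r ^ ((n:ℝ) - α)) * V) := by
          rw [ENNReal.ofReal_mul (Real.rpow_nonneg hr.le _)]; ring
  -- real constant identity
  have hreal : ∀ k : ℕ, R * ((3 * R * 2 ^ k) ^ p * (8 * R * 2 ^ k) ^ ((n:ℝ) - α)) =
      (3:ℝ) ^ p * (8:ℝ) ^ ((n:ℝ) - α) * ((2:ℝ) ^ k)⁻¹ := by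
    intro k
    have hRs : (0:ℝ) < R * 2 ^ k := by positivity
    rw [show (3:ℝ) * R * 2 ^ k = 3 * (R * 2 ^ k) by ring,
      show (8:ℝ) * R * 2 ^ k = 8 * (R * 2 ^ k) by ring,
      Real.mul_rpow (by norm_num) hRs.le, Real.mul_rpow (by norm_num) hRs.le]
    have hkey : (R * 2 ^ k) ^ p * (R * 2 ^ k) ^ ((n:ℝ) - α) = (R * 2 ^ k)⁻¹ := by
      rw [← Real.rpow_add hRs, show p + ((n:ℝ) - α) = -1 by rw [hpdef]; ring,
        Real.rpow_neg_one]
    calc R * ((3:ℝ) ^ p * (R * 2 ^ k) ^ p * ((8:ℝ) ^ ((n:ℝ) - α) * (R * 2 ^ k) ^ ((n:ℝ) - α)))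
        = (3:ℝ) ^ p * (8:ℝ) ^ ((n:ℝ) - α) *
          (R * ((R * 2 ^ k) ^ p * (R * 2 ^ k) ^ ((n:ℝ) - α))) := by ring
      _ = (3:ℝ) ^ p * (8:ℝ) ^ ((n:ℝ) - α) * (R * (R * 2 ^ k)⁻¹) := by rw [hkey]
      _ = (3:ℝ) ^ p * (8:ℝ) ^ ((n:ℝ) - α) * ((2:ℝ) ^ k)⁻¹ := by
          rw [mul_inv, ← mul_assoc R, mul_inv_cancel₀ hR.ne', one_mul]
  -- per-term bound
  have hterm : ∀ k : ℕ, ENNReal.ofReal R * ∫⁻ x in A k, ENNReal.ofReal (dist x x₀ ^ p) ∂μ ≤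
      ENNReal.ofReal ((3:ℝ) ^ p * (8:ℝ) ^ ((n:ℝ) - α)) * (2:ℝ≥0∞)⁻¹ ^ k * (F * V) := by
    intro k
    have h8 : (0:ℝ) < 8 * R * 2 ^ k := by positivity
    have step : ∫⁻ x in A k, ENNReal.ofReal (dist x x₀ ^ p) ∂μ ≤
        ENNReal.ofReal ((3 * R * 2 ^ k) ^ p) *
          (F * ENNReal.ofReal ((8 * R * 2 ^ k) ^ ((n:ℝ) - α)) * V) :=
      (annk k).trans (mul_le_mul_right ((hmuA k).trans (hball _ h8)) _)
    calc ENNReal.ofReal R * ∫⁻ x in A k, ENNReal.ofReal (dist x x₀ ^ p) ∂μ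
        ≤ ENNReal.ofReal R * (ENNReal.ofReal ((3 * R * 2 ^ k) ^ p) *
            (F * ENNReal.ofReal ((8 * R * 2 ^ k) ^ ((n:ℝ) - α)) * V)) :=
          mul_le_mul_right step _
      _ = ENNReal.ofReal (R * ((3 * R * 2 ^ k) ^ p * (8 * R * 2 ^ k) ^ ((n:ℝ) - α))) *
          (F * V) := by
          rw [ENNReal.ofReal_mul hR.le, ENNReal.ofReal_mul (Real.rpow_nonneg (by positivity) _)]
          ring
      _ = ENNReal.ofReal ((3:ℝ) ^ p * (8:ℝ) ^ ((n:ℝ) - α) * ((2:ℝ) ^ k)⁻¹) * (F * V) := by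
          rw [hreal k]
      _ = ENNReal.ofReal ((3:ℝ) ^ p * (8:ℝ) ^ ((n:ℝ) - α)) * (2:ℝ≥0∞)⁻¹ ^ k * (F * V) := by
          rw [ENNReal.ofReal_mul (by positivity), ← inv_pow,
            ENNReal.ofReal_pow (by norm_num), ENNReal.ofReal_inv_of_pos two_pos,
            ENNReal.ofReal_ofNat]
  -- combine
  calc ENNReal.ofReal R * ∫⁻ x in (Metric.ball x₀ (3 * R))ᶜ,
        ENNReal.ofReal (dist x x₀ ^ p) ∂μ
      ≤ ENNReal.ofReal R * ∑' k : ℕ, ∫⁻ x in A k, ENNReal.ofReal (dist x x₀ ^ p) ∂μ := by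
        refine mul_le_mul_right ?_ _
        exact (lintegral_mono_set hcover).trans (lintegral_iUnion_le _ _)
    _ = ∑' k : ℕ, ENNReal.ofReal R * ∫⁻ x in A k, ENNReal.ofReal (dist x x₀ ^ p) ∂μ :=
        ENNReal.tsum_mul_left.symm
    _ ≤ ∑' k : ℕ, ENNReal.ofReal ((3:ℝ) ^ p * (8:ℝ) ^ ((n:ℝ) - α)) * (2:ℝ≥0∞)⁻¹ ^ k * (F * V) :=
        ENNReal.tsum_le_tsum hterm
    _ = ENNReal.ofReal ((3:ℝ) ^ p * (8:ℝ) ^ ((n:ℝ) - α)) * (∑' k : ℕ, (2:ℝ≥0∞)⁻¹ ^ k) *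
        (F * V) := by
        rw [ENNReal.tsum_mul_right, ENNReal.tsum_mul_left]
    _ = (2 * ENNReal.ofReal ((3:ℝ) ^ p * (8:ℝ) ^ ((n:ℝ) - α)) * V) * F := by
        rw [ENNReal.tsum_geometric]
        have : (1 - (2:ℝ≥0∞)⁻¹)⁻¹ = 2 := by
          rw [ENNReal.one_sub_inv_two, inv_inv]
        rw [this]; ring

lemma pointwise_bound {n : ℕ} {α : ℝ} (hα : 0 < α) (hαn : α < n)
    (x₀ : EuclideanSpace ℝ (Fin n)) {R : ℝ} (hR : 0 < R)
    (a : EuclideanSpace ℝ (Fin n) → ℝ) (ha : Measurable a) {M : ℝ} (hM : ∀ x, |a x| ≤ M)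
    (hsupp : ∀ x ∉ Metric.ball x₀ R, a x = 0) (hzero : (∫ y, a y) = 0)
    {x : EuclideanSpace ℝ (Fin n)} (hx : x ∉ Metric.ball x₀ (3 * R)) :
    |rieszPot n α a x| ≤ (rieszGamma n α)⁻¹ * ((∫ y, |a y|) *
      (((n:ℝ) - α) * (2/3 : ℝ) ^ (α - (n:ℝ) - 1) * R * dist x x₀ ^ (α - (n:ℝ) - 1))) := by
  have hq : α - (n:ℝ) < 0 := by linarith
  have hnα : (0:ℝ) < (n:ℝ) - α := by linarith
  have hD : 3 * R ≤ dist x x₀ := by simpa [Metric.mem_ball, not_lt] using hx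
  have hDpos : 0 < dist x x₀ := lt_of_lt_of_le (by positivity) hD
  have hm : (0:ℝ) < 2/3 * dist x x₀ := by positivity
  have hdm : Measurable fun y : EuclideanSpace ℝ (Fin n) => dist x y :=
    (continuous_const.dist continuous_id).measurable
  have hM0 : 0 ≤ M := le_trans (abs_nonneg _) (hM x₀)
  -- kernel estimate
  have hker : ∀ y ∈ Metric.ball x₀ R,
      |dist x y ^ (α - (n:ℝ)) - dist x x₀ ^ (α - (n:ℝ))| ≤
      ((n:ℝ) - α) * (2/3 : ℝ) ^ (α - (n:ℝ) - 1) * R * dist x x₀ ^ (α - (n:ℝ) - 1) := by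
    intro y hy
    have hyR : dist y x₀ < R := hy
    have htri : dist x x₀ ≤ dist x y + dist y x₀ := dist_triangle _ _ _
    have h1 : 2/3 * dist x x₀ ≤ dist x y := by linarith
    have h2 : 2/3 * dist x x₀ ≤ dist x x₀ := by linarith
    have hmvt := rpow_sub_rpow_abs_le hq hm h1 h2
    have habs : |dist x y - dist x x₀| ≤ R := by
      have := abs_dist_sub_le y x₀ x
      rw [dist_comm y x, dist_comm x₀ x] at this
      linarith [this, hyR]
    calc |dist x y ^ (α - (n:ℝ)) - dist x x₀ ^ (α - (n:ℝ))|
        ≤ (-(α - (n:ℝ))) * (2/3 * dist x x₀) ^ (α - (n:ℝ) - 1) * |dist x y - dist x x₀| :=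
          hmvt
      _ ≤ (-(α - (n:ℝ))) * (2/3 * dist x x₀) ^ (α - (n:ℝ) - 1) * R := by
          refine mul_le_mul_of_nonneg_left habs ?_
          have := Real.rpow_nonneg hm.le (α - (n:ℝ) - 1)
          nlinarith
      _ = ((n:ℝ) - α) * (2/3 : ℝ) ^ (α - (n:ℝ) - 1) * R * dist x x₀ ^ (α - (n:ℝ) - 1) := by
          rw [Real.mul_rpow (by norm_num) hDpos.le]; ring
  set K : ℝ := ((n:ℝ) - α) * (2/3 : ℝ) ^ (α - (n:ℝ) - 1) * R * dist x x₀ ^ (α - (n:ℝ) - 1)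
    with hK
  have hK0 : 0 ≤ K :=
    mul_nonneg (mul_nonneg (mul_nonneg hnα.le (Real.rpow_nonneg (by norm_num) _)) hR.le)
      (Real.rpow_nonneg hDpos.le _)
  -- integrability
  have hMa : Integrable a := integrable_of_support_ball ha hsupp hM
  have hint1 : Integrable (fun y => a y * dist x y ^ (α - (n:ℝ))) := by
    refine integrable_of_support_ball (M := M * (2*R) ^ (α - (n:ℝ)))
      (ha.mul (hdm.pow measurable_const)) (fun y hy => by rw [hsupp y hy, zero_mul]) fun y => ?_
    by_cases hy : y ∈ Metric.ball x₀ R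
    · have hyR : dist y x₀ < R := hy
      have htri : dist x x₀ ≤ dist x y + dist y x₀ := dist_triangle _ _ _
      have h2R : 2 * R ≤ dist x y := by linarith
      rw [abs_mul, abs_of_nonneg (Real.rpow_nonneg dist_nonneg _)]
      exact mul_le_mul (hM y) (Real.rpow_le_rpow_of_nonpos (by positivity) h2R hq.le)
        (Real.rpow_nonneg dist_nonneg _) hM0
    · rw [hsupp y hy, zero_mul, abs_zero]
      positivity
  have hint2 : Integrable (fun y => a y * dist x x₀ ^ (α - (n:ℝ))) := hMa.mul_const _
  -- cancellation
  have h4 : ∫ y, a y * dist x x₀ ^ (α - (n:ℝ)) = 0 := by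
    rw [integral_mul_const, hzero, zero_mul]
  have hrw : ∫ y, a y * dist x y ^ (α - (n:ℝ)) =
      ∫ y, a y * (dist x y ^ (α - (n:ℝ)) - dist x x₀ ^ (α - (n:ℝ))) := by
    have h3 : ∫ y, a y * (dist x y ^ (α - (n:ℝ)) - dist x x₀ ^ (α - (n:ℝ))) =
        (∫ y, a y * dist x y ^ (α - (n:ℝ))) - ∫ y, a y * dist x x₀ ^ (α - (n:ℝ)) := by
      simp_rw [mul_sub]
      exact integral_sub hint1 hint2
    rw [h3, h4, sub_zero]
  -- bound the integral
  have hbnd : |∫ y, a y * (dist x y ^ (α - (n:ℝ)) - dist x x₀ ^ (α - (n:ℝ)))| ≤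
      (∫ y, |a y|) * K := by
    have hg : Integrable (fun y => |a y| * K) := hMa.abs.mul_const K
    have hpt : ∀ y, ‖a y * (dist x y ^ (α - (n:ℝ)) - dist x x₀ ^ (α - (n:ℝ)))‖ ≤
        |a y| * K := by
      intro y
      by_cases hy : y ∈ Metric.ball x₀ R
      · rw [Real.norm_eq_abs, abs_mul]
        exact mul_le_mul_of_nonneg_left (hker y hy) (abs_nonneg _)
      · simp [hsupp y hy, hK0]
    have hb := norm_integral_le_of_norm_le hg (ae_of_all _ hpt)
    rw [integral_mul_const] at hb
    simpa [Real.norm_eq_abs] using hb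
  rw [rieszPot, abs_mul, abs_of_nonneg (inv_nonneg.2 (rieszGamma_pos hα hαn).le), hrw]
  exact mul_le_mul_of_nonneg_left hbnd (inv_nonneg.2 (rieszGamma_pos hα hαn).le)

/-- Global (far-field) estimate for the Riesz potential of an atom: if `a` is bounded,
supported in `B = B_R(x₀)`, and has vanishing integral, and `M_α μ` is bounded, then
`∫_{(3B)ᶜ} |I_α a| dμ ≤ C ∫_B |a| M_α μ dy`. -/
theorem rieszPot_atom_global_estimate (n : ℕ) (α : ℝ) (hα : 0 < α) (hαn : α < n) :
    ∃ C : ℝ≥0∞, 0 < C ∧ C ≠ ⊤ ∧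
      ∀ (μ : Measure (EuclideanSpace ℝ (Fin n))) (A : ℝ),
        (∀ x, fracMax n α μ x ≤ ENNReal.ofReal A) →
        ∀ (x₀ : EuclideanSpace ℝ (Fin n)) (R : ℝ), 0 < R →
        ∀ a : EuclideanSpace ℝ (Fin n) → ℝ, Measurable a →
          (∃ M : ℝ, ∀ x, |a x| ≤ M) →
          (∀ x ∉ Metric.ball x₀ R, a x = 0) →
          (∫ y, a y) = 0 →
          ∫⁻ x in (Metric.ball x₀ (3 * R))ᶜ, ENNReal.ofReal |rieszPot n α a x| ∂μ ≤
            C * ∫⁻ y in Metric.ball x₀ R, (‖a y‖₊ : ℝ≥0∞) * fracMax n α μ y := by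
  have hn : 0 < n := by exact_mod_cast hα.trans hαn
  haveI : Nonempty (Fin n) := ⟨⟨0, hn⟩⟩
  have hnα : (0:ℝ) < (n:ℝ) - α := by linarith
  set p : ℝ := α - (n:ℝ) - 1 with hpdef
  set V := volume (Metric.ball (0 : EuclideanSpace ℝ (Fin n)) 1) with hV
  have hV0 : V ≠ 0 := (Metric.measure_ball_pos volume _ one_pos).ne'
  have hVt : V ≠ ⊤ := measure_ball_lt_top.ne
  set γi : ℝ := (rieszGamma n α)⁻¹ with hγi
  have hγi0 : 0 < γi := inv_pos.2 (rieszGamma_pos hα hαn)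
  set c₁ : ℝ := ((n:ℝ) - α) * (2/3 : ℝ) ^ p with hc₁
  have hc₁0 : 0 < c₁ := mul_pos hnα (Real.rpow_pos_of_pos (by norm_num) _)
  set C₂ : ℝ≥0∞ := 2 * ENNReal.ofReal ((3:ℝ) ^ p * (8:ℝ) ^ ((n:ℝ) - α)) * V with hC₂
  have hC₂0 : C₂ ≠ 0 := by
    refine mul_ne_zero (mul_ne_zero two_ne_zero ?_) hV0
    exact (ENNReal.ofReal_pos.2 (mul_pos (Real.rpow_pos_of_pos (by norm_num) _)
      (Real.rpow_pos_of_pos (by norm_num) _))).ne'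
  have hC₂t : C₂ ≠ ⊤ := by
    exact ENNReal.mul_ne_top (ENNReal.mul_ne_top ENNReal.ofNat_ne_top ENNReal.ofReal_ne_top) hVt
  refine ⟨ENNReal.ofReal (γi * c₁) * C₂, ?_, ?_, ?_⟩
  · rw [pos_iff_ne_zero]
    exact mul_ne_zero (ENNReal.ofReal_pos.2 (mul_pos hγi0 hc₁0)).ne' hC₂0
  · exact ENNReal.mul_ne_top ENNReal.ofReal_ne_top hC₂t
  intro μ A _hA x₀ R hR a ha hMex hsupp hzero
  obtain ⟨M, hM⟩ := hMex
  have hMa : Integrable a := integrable_of_support_ball ha hsupp hM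
  set Ia : ℝ := ∫ y, |a y| with hIa
  have hIa0 : 0 ≤ Ia := integral_nonneg fun y => abs_nonneg _
  set T : ℝ≥0∞ := ∫⁻ x in (Metric.ball x₀ (3 * R))ᶜ,
    ENNReal.ofReal (dist x x₀ ^ p) ∂μ with hT
  have hdm : Measurable fun x : EuclideanSpace ℝ (Fin n) => dist x x₀ :=
    (continuous_id.dist continuous_const).measurable
  -- step 1
  have step1 : ∫⁻ x in (Metric.ball x₀ (3 * R))ᶜ, ENNReal.ofReal |rieszPot n α a x| ∂μ ≤
      ∫⁻ x in (Metric.ball x₀ (3 * R))ᶜ,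
        ENNReal.ofReal (γi * c₁ * Ia * R) * ENNReal.ofReal (dist x x₀ ^ p) ∂μ := by
    refine setLIntegral_mono (measurable_const.mul ((hdm.pow measurable_const).ennreal_ofReal))
      fun x hx => ?_
    rw [← ENNReal.ofReal_mul (by positivity)]
    refine ENNReal.ofReal_le_ofReal ?_
    refine (pointwise_bound hα hαn x₀ hR a ha hM hsupp hzero hx).trans_eq ?_
    rw [hγi, hc₁, hIa, hpdef]; ring
  have step2 : ∫⁻ x in (Metric.ball x₀ (3 * R))ᶜ,
      ENNReal.ofReal (γi * c₁ * Ia * R) * ENNReal.ofReal (dist x x₀ ^ p) ∂μ =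
      ENNReal.ofReal (γi * c₁) * (ENNReal.ofReal Ia * (ENNReal.ofReal R * T)) := by
    rw [lintegral_const_mul' _ _ ENNReal.ofReal_ne_top, hT,
      ENNReal.ofReal_mul (by positivity), ENNReal.ofReal_mul (by positivity)]
    ring
  -- step 3 : ofReal Ia = ∫⁻ in ball, ‖a‖₊
  have step3 : ENNReal.ofReal Ia = ∫⁻ y in Metric.ball x₀ R, (‖a y‖₊ : ℝ≥0∞) := by
    have h1 := ofReal_integral_norm_eq_lintegral_enorm hMa
    simp_rw [Real.norm_eq_abs, enorm_eq_nnnorm] at h1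
    rw [hIa, h1]
    have h2 : ∀ y, (‖a y‖₊ : ℝ≥0∞) =
        Set.indicator (Metric.ball x₀ R) (fun y => (‖a y‖₊ : ℝ≥0∞)) y := by
      intro y
      by_cases hy : y ∈ Metric.ball x₀ R
      · rw [Set.indicator_of_mem hy]
      · rw [Set.indicator_of_notMem hy, hsupp y hy]; simp
    rw [lintegral_congr h2, lintegral_indicator measurableSet_ball]
  -- step 4
  have step4 : (∫⁻ y in Metric.ball x₀ R, (‖a y‖₊ : ℝ≥0∞)) * (ENNReal.ofReal R * T) ≤
      C₂ * ∫⁻ y in Metric.ball x₀ R, (‖a y‖₊ : ℝ≥0∞) * fracMax n α μ y := by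
    rw [← lintegral_mul_const _ (ha.nnnorm.coe_nnreal_ennreal)]
    have hpt : ∀ y, y ∈ Metric.ball x₀ R →
        (‖a y‖₊ : ℝ≥0∞) * (ENNReal.ofReal R * T) ≤ (‖a y‖₊ : ℝ≥0∞) * (C₂ * fracMax n α μ y) :=
      fun y hy => mul_le_mul_right (tail_bound hα hαn μ x₀ y hR hy) _
    calc ∫⁻ y in Metric.ball x₀ R, (‖a y‖₊ : ℝ≥0∞) * (ENNReal.ofReal R * T)
        ≤ ∫⁻ y in Metric.ball x₀ R, (‖a y‖₊ : ℝ≥0∞) * (C₂ * fracMax n α μ y) := by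
          refine lintegral_mono fun y => ?_
          by_cases hy : y ∈ Metric.ball x₀ R
          · exact hpt y hy
          · simp [hsupp y hy]
      _ = C₂ * ∫⁻ y in Metric.ball x₀ R, (‖a y‖₊ : ℝ≥0∞) * fracMax n α μ y := by
          rw [← lintegral_const_mul' C₂ _ hC₂t]
          exact lintegral_congr fun y => mul_left_comm _ _ _
  calc ∫⁻ x in (Metric.ball x₀ (3 * R))ᶜ, ENNReal.ofReal |rieszPot n α a x| ∂μ
      ≤ ENNReal.ofReal (γi * c₁) * (ENNReal.ofReal Ia * (ENNReal.ofReal R * T)) :=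
        step1.trans_eq step2
    _ = ENNReal.ofReal (γi * c₁) *
        ((∫⁻ y in Metric.ball x₀ R, (‖a y‖₊ : ℝ≥0∞)) * (ENNReal.ofReal R * T)) := by
        rw [step3]
    _ ≤ ENNReal.ofReal (γi * c₁) *
        (C₂ * ∫⁻ y in Metric.ball x₀ R, (‖a y‖₊ : ℝ≥0∞) * fracMax n α μ y) :=
        mul_le_mul_right step4 _
    _ = ENNReal.ofReal (γi * c₁) * C₂ *
        ∫⁻ y in Metric.ball x₀ R, (‖a y‖₊ : ℝ≥0∞) * fracMax n α μ y := by
        ring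
end
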